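/- For all k ≤ n, the support-rank of HD_{≥k}^n satisfies suprank(HD_{≥k}^n) ≤ 4^k. -/

import Mathlib

open Matrix

/-- The support-rank of a boolean matrix: the minimum rank of a real matrix with
the same support. -/
noncomputable def suprank {I J : Type*} [Fintype J] (M : Matrix I J Bool) : ℕ :=
  sInf {r : ℕ | ∃ A : Matrix I J ℝ, A.rank = r ∧
    ∀ i j, A i j = 0 ↔ M i j = false}

/-- The ≥k-Hamming Distance matrix on n bits. -/
def HDge (n k : ℕ) : Matrix (Fin n → Bool) (Fin n → Bool) Bool :=
  Matrix.of fun x y => decide (k ≤ hammingDist x y)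

/-! ### Auxiliary material: Cauchy–Binet formula -/

section CauchyBinet

open Finset Equiv

variable {N k : ℕ} {R : Type*} [CommRing R]

lemma HDaux.orderEmbOfFin_congr {α : Type*} [LinearOrder α] {S T : Finset α} {k : ℕ} (h : S = T)
    (hS : S.card = k) (a : Fin k) :
    S.orderEmbOfFin hS a = T.orderEmbOfFin (by rw [← h]; exact hS) a := by subst h; rfl

noncomputable def HDaux.permOf {p : Fin k → Fin N} (hp : Function.Injective p)
    (hcard : (Finset.univ.image p).card = k) : Equiv.Perm (Fin k) :=
  Equiv.ofBijective
    (fun a => ((Finset.univ.image p).orderIsoOfFin hcard).symm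
        ⟨p a, by simp [Finset.mem_image]⟩)
    ((Finite.injective_iff_bijective).mp (fun a b hab => by
      apply hp
      have := congrArg ((Finset.univ.image p).orderIsoOfFin hcard) hab
      simpa using this))

lemma HDaux.permOf_spec {p : Fin k → Fin N} (hp : Function.Injective p)
    (hcard : (Finset.univ.image p).card = k) (a : Fin k) :
    (Finset.univ.image p).orderEmbOfFin hcard (HDaux.permOf hp hcard a) = p a := by
  simp [HDaux.permOf, ← Finset.coe_orderIsoOfFin_apply]

lemma HDaux.card_image_inj {p : Fin k → Fin N} (hp : Function.Injective p) :
    (Finset.univ.image p).card = k := by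
  rw [Finset.card_image_of_injective _ hp, Finset.card_univ, Fintype.card_fin]

lemma HDaux.sum_injective_eq {β : Type*} [AddCommMonoid β] (f : (Fin k → Fin N) → β) :
    ∑ p ∈ Finset.univ.filter fun p : Fin k → Fin N => Function.Injective p, f p
      = ∑ x : {S : Finset (Fin N) // S.card = k} × Equiv.Perm (Fin k),
          f (fun a => x.1.1.orderEmbOfFin x.1.2 (x.2 a)) := by
  refine Finset.sum_bij'
    (i := fun p hp => (⟨Finset.univ.image p,
        HDaux.card_image_inj (by simpa using hp)⟩, HDaux.permOf (by simpa using hp)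
          (HDaux.card_image_inj (by simpa using hp))))
    (j := fun x _ => fun a => x.1.1.orderEmbOfFin x.1.2 (x.2 a))
    (fun _ _ => Finset.mem_univ _) ?_ ?_ ?_ ?_
  · rintro ⟨⟨S, hS⟩, σ⟩ -
    exact Finset.mem_filter.mpr ⟨Finset.mem_univ _,
      (S.orderEmbOfFin hS).injective.comp σ.injective⟩
  · intro p hp
    funext a
    exact HDaux.permOf_spec (by simpa using hp) _ a
  · rintro ⟨⟨S, hS⟩, σ⟩ -
    have himg : Finset.univ.image (fun a => S.orderEmbOfFin hS (σ a)) = S := by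
      apply Finset.coe_injective
      rw [Finset.coe_image, Finset.coe_univ, Set.image_univ,
        show (fun a => S.orderEmbOfFin hS (σ a)) = (S.orderEmbOfFin hS) ∘ σ from rfl,
        Set.range_comp, Equiv.range_eq_univ, Set.image_univ, Finset.range_orderEmbOfFin]
    refine Prod.ext (Subtype.ext himg) ?_
    ext a
    have h1 := HDaux.permOf_spec (p := fun a => S.orderEmbOfFin hS (σ a))
      ((S.orderEmbOfFin hS).injective.comp σ.injective)
      (HDaux.card_image_inj ((S.orderEmbOfFin hS).injective.comp σ.injective)) a
    rw [HDaux.orderEmbOfFin_congr himg] at h1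
    exact congrArg Fin.val ((S.orderEmbOfFin hS).injective h1)
  · intro p hp
    exact congrArg f (funext fun a => (HDaux.permOf_spec (by simpa using hp) _ a).symm)

lemma HDaux.det_mul_expand (M : Matrix (Fin k) (Fin N) R) (Q : Matrix (Fin N) (Fin k) R) :
    det (M * Q) = ∑ p : Fin k → Fin N, (∏ i, Q (p i) i) * det (M.submatrix id p) := by
  calc det (M * Q)
      = ∑ σ : Equiv.Perm (Fin k), ((Equiv.Perm.sign σ : ℤ) : R) * ∏ i, (∑ j, M (σ i) j * Q j i) := by
        simp [det_apply', mul_apply]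
    _ = ∑ σ : Equiv.Perm (Fin k), ∑ p : Fin k → Fin N,
          ((Equiv.Perm.sign σ : ℤ) : R) * ∏ i, M (σ i) (p i) * Q (p i) i := by
        simp_rw [Finset.prod_univ_sum, Fintype.piFinset_univ, Finset.mul_sum]
    _ = ∑ p : Fin k → Fin N, ∑ σ : Equiv.Perm (Fin k),
          ((Equiv.Perm.sign σ : ℤ) : R) * ∏ i, M (σ i) (p i) * Q (p i) i := Finset.sum_comm
    _ = ∑ p : Fin k → Fin N, (∏ i, Q (p i) i) * det (M.submatrix id p) := by
        refine Finset.sum_congr rfl fun p _ => ?_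
        rw [det_apply']
        simp_rw [Finset.prod_mul_distrib, Finset.mul_sum, submatrix_apply, id_eq]
        refine Finset.sum_congr rfl fun σ _ => by ring

theorem HDaux.cauchyBinet (M : Matrix (Fin k) (Fin N) R) (Q : Matrix (Fin N) (Fin k) R) :
    det (M * Q) = ∑ S : {S : Finset (Fin N) // S.card = k},
      det (M.submatrix id (S.1.orderEmbOfFin S.2)) * det (Q.submatrix (S.1.orderEmbOfFin S.2) id) := by
  classical
  rw [HDaux.det_mul_expand, ← Finset.sum_filter_add_sum_filter_not Finset.univ
    (fun p : Fin k → Fin N => Function.Injective p)]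
  have hzero : ∑ p ∈ Finset.univ.filter (fun p : Fin k → Fin N => ¬ Function.Injective p),
      (∏ i, Q (p i) i) * det (M.submatrix id p) = 0 := by
    refine Finset.sum_eq_zero fun p hp => ?_
    rw [Finset.mem_filter] at hp
    simp only [Function.Injective] at hp
    push_neg at hp
    obtain ⟨i, j, hij, hne⟩ := hp.2
    rw [Matrix.det_zero_of_column_eq hne (fun a => by simp [hij]), mul_zero]
  rw [hzero, add_zero, HDaux.sum_injective_eq, Fintype.sum_prod_type]
  refine Finset.sum_congr rfl fun S _ => ?_
  have hdet : ∀ σ : Equiv.Perm (Fin k),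
      det (M.submatrix id fun a => (S.1.orderEmbOfFin S.2) (σ a))
        = ((Equiv.Perm.sign σ : ℤ) : R) * det (M.submatrix id (S.1.orderEmbOfFin S.2)) := by
    intro σ
    have h2 : (M.submatrix id fun a => (S.1.orderEmbOfFin S.2) (σ a))
        = (M.submatrix id (S.1.orderEmbOfFin S.2)).submatrix id σ := by
      rw [Matrix.submatrix_submatrix]
      rfl
    rw [h2, det_permute']
  simp_rw [hdet]
  rw [det_apply' (Q.submatrix (⇑(S.1.orderEmbOfFin S.2)) id), Finset.mul_sum]
  refine Finset.sum_congr rfl fun σ _ => ?_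
  simp only [submatrix_apply, id_eq]
  ring

theorem HDaux.rank_le_of_cb {X Y : Type*} [Fintype X] [Fintype Y]
    (U : X → Matrix (Fin k) (Fin N) ℝ) (V : Y → Matrix (Fin N) (Fin k) ℝ) :
    (Matrix.of fun x y => det (U x * V y)).rank ≤ N.choose k := by
  classical
  set B : Matrix X {S : Finset (Fin N) // S.card = k} ℝ :=
    Matrix.of fun x S => det ((U x).submatrix id (S.1.orderEmbOfFin S.2)) with hB
  set C : Matrix {S : Finset (Fin N) // S.card = k} Y ℝ :=
    Matrix.of fun S y => det ((V y).submatrix (S.1.orderEmbOfFin S.2) id) with hC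
  have hfac : (Matrix.of fun x y => det (U x * V y)) = B * C := by
    ext x y
    simp only [Matrix.of_apply, Matrix.mul_apply, hB, hC]
    exact HDaux.cauchyBinet (U x) (V y)
  rw [hfac]
  calc (B * C).rank ≤ B.rank := Matrix.rank_mul_le_left B C
    _ ≤ Fintype.card {S : Finset (Fin N) // S.card = k} := Matrix.rank_le_card_width B
    _ = N.choose k := by rw [Fintype.card_finset_len, Fintype.card_fin]

lemma HDaux.choose_le_four_pow (k : ℕ) : (k + k).choose k ≤ 4 ^ k := by
  have h := Nat.sum_range_choose (k + k)
  have hle : (k + k).choose k ≤ ∑ m ∈ Finset.range (k + k + 1), (k + k).choose m :=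
    Finset.single_le_sum (fun _ _ => Nat.zero_le _) (by simp [Finset.mem_range])
  rw [h] at hle
  calc (k + k).choose k ≤ 2 ^ (k + k) := hle
    _ = 4 ^ k := by rw [show (4:ℕ) = 2 ^ 2 from rfl, ← pow_mul]; ring_nf

end CauchyBinet

/-! ### The construction -/

section Construction

open Finset

variable {n k : ℕ}

def HDaux.Fmat {R : Type*} [CommRing R] (v w : Fin n → Fin k → R) (x : Fin n → Bool) :
    Matrix (Fin k) (Fin k) R :=
  ∑ i : Fin n, (if x i then (1:R) else 0) • Matrix.vecMulVec (v i) (w i)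

open HDaux

lemma HDaux.Fmat_apply {R : Type*} [CommRing R] (v w : Fin n → Fin k → R) (x : Fin n → Bool)
    (a b : Fin k) :
    Fmat v w x a b = ∑ i, (if x i then (1:R) else 0) * (v i a * w i b) := by
  simp only [Fmat, Matrix.sum_apply, Matrix.smul_apply, Matrix.vecMulVec_apply, smul_eq_mul,
    ite_mul, one_mul, zero_mul]

lemma HDaux.Fmat_sub_apply {R : Type*} [CommRing R] (v w : Fin n → Fin k → R) (x y : Fin n → Bool)
    (a b : Fin k) :
    (Fmat v w x - Fmat v w y) a b
      = ∑ i, ((if x i then (1:R) else 0) - (if y i then 1 else 0)) * (v i a * w i b) := by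
  simp [Matrix.sub_apply, Fmat_apply, ← Finset.sum_sub_distrib, sub_mul]

lemma HDaux.Fmat_map {R S : Type*} [CommRing R] [CommRing S] (φ : R →+* S)
    (v w : Fin n → Fin k → R) (x : Fin n → Bool) :
    (Fmat v w x).map φ = Fmat (fun i a => φ (v i a)) (fun i a => φ (w i a)) x := by
  ext a b
  simp [Matrix.map_apply, Fmat_apply, map_sum, _root_.map_mul, apply_ite φ]

lemma HDaux.det_Fmat_sub_eq_zero (v w : Fin n → Fin k → ℝ) {x y : Fin n → Bool}
    (h : hammingDist x y < k) : det (Fmat v w x - Fmat v w y) = 0 := by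
  classical
  set D : Finset (Fin n) := Finset.univ.filter fun i => x i ≠ y i with hDdef
  have hD : D.card < k := by
    have : hammingDist x y = D.card := by
      simp only [hammingDist, hDdef]
    omega
  set M := Fmat v w x - Fmat v w y with hMdef
  set T : Finset (Fin k → ℝ) := D.image w with hTdef
  have hrows : ∀ a, M a ∈ Submodule.span ℝ (T : Set (Fin k → ℝ)) := by
    intro a
    have hM : M = ∑ i ∈ D, ((if x i then (1:ℝ) else 0) - (if y i then 1 else 0)) •
        Matrix.vecMulVec (v i) (w i) := by
      rw [hMdef, Fmat, Fmat, ← Finset.sum_sub_distrib]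
      simp_rw [← sub_smul]
      refine (Finset.sum_subset (Finset.subset_univ D) fun i _ hiD => ?_).symm
      have : x i = y i := by
        by_contra hne
        exact hiD (Finset.mem_filter.mpr ⟨Finset.mem_univ _, hne⟩)
      rw [this, sub_self, zero_smul]
    have hMa : M a = ∑ i ∈ D,
        (((if x i then (1:ℝ) else 0) - (if y i then 1 else 0)) * v i a) • w i := by
      rw [hM]
      funext b
      simp [Matrix.sum_apply, Matrix.vecMulVec_apply, mul_assoc]
    rw [hMa]
    refine Submodule.sum_mem _ fun i hi => Submodule.smul_mem _ _ (Submodule.subset_span ?_)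
    exact Finset.mem_coe.mpr (Finset.mem_image_of_mem w hi)
  have hdep : ¬ LinearIndependent ℝ (fun a : Fin k => M a) := by
    intro hli
    set W := Submodule.span ℝ (T : Set (Fin k → ℝ))
    have hli' : LinearIndependent ℝ (fun a : Fin k => (⟨M a, hrows a⟩ : W)) := by
      apply LinearIndependent.of_comp W.subtype
      convert hli
      rfl
    have hcard := hli'.fintype_card_le_finrank
    have hWle : Module.finrank ℝ W ≤ T.card := finrank_span_finset_le_card T
    have hTle : T.card ≤ D.card := Finset.card_image_le
    simp only [Fintype.card_fin] at hcard
    omega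
  obtain ⟨g, hg0, a, hga⟩ := Fintype.not_linearIndependent_iff.mp hdep
  have hvm : g ᵥ* M = 0 := by
    funext j
    have := congrFun hg0 j
    simpa [Matrix.vecMul, dotProduct, Finset.sum_apply] using this
  exact Matrix.exists_vecMul_eq_zero_iff.mp ⟨g, fun hgz => hga (by rw [hgz]; rfl), hvm⟩

lemma HDaux.exists_good (n k : ℕ) : ∃ v w : Fin n → Fin k → ℝ,
    ∀ x y : Fin n → Bool, k ≤ hammingDist x y → det (Fmat v w x - Fmat v w y) ≠ 0 := by
  classical
  set σt := (Fin n × Fin k) ⊕ (Fin n × Fin k) with hσt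
  set vp : Fin n → Fin k → MvPolynomial σt ℝ := fun i a => MvPolynomial.X (Sum.inl (i, a))
  set wp : Fin n → Fin k → MvPolynomial σt ℝ := fun i a => MvPolynomial.X (Sum.inr (i, a))
  set P : (Fin n → Bool) → (Fin n → Bool) → MvPolynomial σt ℝ :=
    fun x y => det (Fmat vp wp x - Fmat vp wp y) with hP
  have evalP : ∀ (ρ : σt → ℝ) (x y : Fin n → Bool),
      MvPolynomial.eval ρ (P x y)
        = det (Fmat (fun i a => ρ (Sum.inl (i, a))) (fun i a => ρ (Sum.inr (i, a))) x
            - Fmat (fun i a => ρ (Sum.inl (i, a))) (fun i a => ρ (Sum.inr (i, a))) y) := by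
    intro ρ x y
    rw [hP]
    rw [RingHom.map_det]
    congr 1
    rw [RingHom.mapMatrix_apply, Matrix.map_sub _ (fun a b => map_sub _ a b), Fmat_map, Fmat_map]
    simp [vp, wp]
  have hPne : ∀ x y : Fin n → Bool, k ≤ hammingDist x y → P x y ≠ 0 := by
    intro x y hxy hzero
    have hcard : k ≤ (Finset.univ.filter fun i => x i ≠ y i).card := by
      have : hammingDist x y = (Finset.univ.filter fun i => x i ≠ y i).card := by
        simp only [hammingDist]
      omega
    obtain ⟨S, hSsub, hScard⟩ := Finset.exists_subset_card_eq hcard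
    set c := S.orderEmbOfFin hScard with hc
    set sgn : Fin n → ℝ := fun i => (if x i then (1:ℝ) else 0) - (if y i then 1 else 0) with hsgn
    set ρ : σt → ℝ := fun s => Sum.rec (fun p => if p.1 = c p.2 then 1 else 0)
      (fun p => if p.1 = c p.2 then sgn p.1 else 0) s with hρ
    have h1 := congrArg (MvPolynomial.eval ρ) hzero
    rw [evalP, map_zero] at h1
    have hId : (Fmat (fun i a => ρ (Sum.inl (i, a))) (fun i a => ρ (Sum.inr (i, a))) x
        - Fmat (fun i a => ρ (Sum.inl (i, a))) (fun i a => ρ (Sum.inr (i, a))) y)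
        = (1 : Matrix (Fin k) (Fin k) ℝ) := by
      ext a b
      rw [Fmat_sub_apply]
      have hterm : ∀ i : Fin n, (((if x i then (1:ℝ) else 0) - (if y i then 1 else 0)) *
          (ρ (Sum.inl (i, a)) * ρ (Sum.inr (i, b))))
          = if i = c a then (sgn i * (if i = c b then sgn i else 0)) else 0 := by
        intro i
        simp only [hρ, hsgn]
        by_cases h1 : i = c a <;> simp [h1]
      rw [Finset.sum_congr rfl fun i _ => hterm i, Finset.sum_ite_eq' Finset.univ (c a) _]
      simp only [Finset.mem_univ, if_true]
      by_cases hab : a = b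
      · subst hab
        simp only [if_pos rfl, Matrix.one_apply_eq]
        have hmem : c a ∈ S := Finset.orderEmbOfFin_mem S hScard a
        have hxy' : x (c a) ≠ y (c a) := by
          have := hSsub hmem
          simpa using (Finset.mem_filter.mp this).2
        rw [hsgn]
        rcases Bool.eq_false_or_eq_true (x (c a)) with hx1 | hx1 <;>
          rcases Bool.eq_false_or_eq_true (y (c a)) with hy1 | hy1 <;>
            simp [hx1, hy1] at hxy' ⊢
      · have : ¬ (c a = c b) := fun hcc => hab (c.injective hcc)
        simp [this, Matrix.one_apply_ne hab]
    rw [hId, det_one] at h1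
    exact one_ne_zero h1
  set Pairs : Finset ((Fin n → Bool) × (Fin n → Bool)) :=
    Finset.univ.filter fun xy => k ≤ hammingDist xy.1 xy.2 with hPairs
  have hProd : (∏ xy ∈ Pairs, P xy.1 xy.2) ≠ 0 := by
    rw [Finset.prod_ne_zero_iff]
    intro xy hxy
    exact hPne xy.1 xy.2 (by simpa [hPairs] using hxy)
  have hex : ∃ ρ : σt → ℝ, MvPolynomial.eval ρ (∏ xy ∈ Pairs, P xy.1 xy.2) ≠ 0 := by
    by_contra hcon
    push_neg at hcon
    exact hProd (MvPolynomial.funext fun ρ => by simpa using hcon ρ)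
  obtain ⟨ρ, hρne⟩ := hex
  refine ⟨fun i a => ρ (Sum.inl (i, a)), fun i a => ρ (Sum.inr (i, a)), fun x y hxy => ?_⟩
  rw [← evalP]
  rw [map_prod] at hρne
  exact Finset.prod_ne_zero_iff.mp hρne (x, y)
    (Finset.mem_filter.mpr ⟨Finset.mem_univ _, hxy⟩)

end Construction

open HDaux

theorem stmt1 (n k : ℕ) (hk : k ≤ n) : suprank (HDge n k) ≤ 4 ^ k := by
  classical
  obtain ⟨v, w, hvw⟩ := exists_good n k
  set A : Matrix (Fin n → Bool) (Fin n → Bool) ℝ :=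
    Matrix.of fun x y => det (Fmat v w x - Fmat v w y) with hA
  have hsupp : ∀ x y, A x y = 0 ↔ HDge n k x y = false := by
    intro x y
    simp only [hA, HDge, Matrix.of_apply, decide_eq_false_iff_not, not_le]
    constructor
    · intro h0
      by_contra hc
      push_neg at hc
      exact hvw x y hc h0
    · intro hlt
      exact det_Fmat_sub_eq_zero v w hlt
  have hrank : A.rank ≤ (k + k).choose k := by
    have h2 : A = Matrix.of fun x y =>
        det (((fromCols (Fmat v w x) (1 : Matrix (Fin k) (Fin k) ℝ)).submatrix id ⇑finSumFinEquiv.symm) *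
             ((fromRows (1 : Matrix (Fin k) (Fin k) ℝ) (-(Fmat v w y))).submatrix ⇑finSumFinEquiv.symm id)) := by
      ext x y
      simp only [hA, Matrix.of_apply]
      congr 1
      rw [Matrix.submatrix_mul_equiv, Matrix.fromCols_mul_fromRows]
      simp [sub_eq_add_neg]
    rw [h2]
    exact rank_le_of_cb
      (fun x => (fromCols (Fmat v w x) 1).submatrix id ⇑finSumFinEquiv.symm)
      (fun y => (fromRows 1 (-(Fmat v w y))).submatrix ⇑finSumFinEquiv.symm id)
  refine le_trans (Nat.sInf_le ⟨A, rfl, hsupp⟩) (le_trans hrank (choose_le_four_pow k))
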